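/- arXiv:2601.17294 — 2 statements merged into one kernel-verified Lean document; each statement's English description precedes it below -/
import Mathlib

section
/- Let t, s, d, k be positive integers with 1 ≤ k ≤ d. Let D be a finite set of k-dimensional linear subspaces of ℝ^d that forms an equal-weight tight t-fusion frame, and for each V ∈ D let Y_V be a finite set of unit vectors in V that is a spherical s-design on the unit sphere of V (in the moment form: for every y ∈ ℝ^d and every integer 0 ≤ m ≤ s, ∑_{z∈Y_V} ⟨z, P_V y⟩^m equals |Y_V|·((1/2)_{m/2}/(k/2)_{m/2})·‖P_V y‖^m when m is even and 0 when m is odd), such that n := |Y_V| is independent of V. Set r := min{s, 2t+1}. Then the multiset Z obtained as the union of the Y_V over V ∈ D is a spherical r-design on S^{d−1}: for every y ∈ ℝ^d and every integer 0 ≤ ℓ ≤ r, ∑_{V∈D} ∑_{z∈Y_V} ⟨z, y⟩^ℓ equals |D|·n·((1/2)_{ℓ/2}/(d/2)_{ℓ/2})·‖y‖^ℓ when ℓ is even and 0 when ℓ is odd. -/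
open scoped RealInnerProductSpace BigOperators

/-- Orthogonal projection onto a subspace `V` of `ℝ^d`, as a linear endomorphism. -/
noncomputable def proj {d : ℕ} (V : Submodule ℝ (EuclideanSpace ℝ (Fin d))) :
    EuclideanSpace ℝ (Fin d) →ₗ[ℝ] EuclideanSpace ℝ (Fin d) :=
  V.subtype ∘ₗ (V.orthogonalProjection).toLinearMap

/-- The Pochhammer symbol `(a)_n = a(a+1)⋯(a+n−1)`. -/
noncomputable def poch (a : ℝ) (n : ℕ) : ℝ := (ascPochhammer ℝ n).eval a

open Polynomial

-- ### polynomial coefficients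
lemma coeff_mul_one' (p q : ℝ[X]) : (p * q).coeff 1 = p.coeff 0 * q.coeff 1 + p.coeff 1 * q.coeff 0 := by
  rw [Polynomial.coeff_mul, Finset.Nat.sum_antidiagonal_eq_sum_range_succ_mk]
  simp [Finset.sum_range_succ]

lemma coeff_mul_two' (p q : ℝ[X]) : (p * q).coeff 2 =
    p.coeff 0 * q.coeff 2 + p.coeff 1 * q.coeff 1 + p.coeff 2 * q.coeff 0 := by
  rw [Polynomial.coeff_mul, Finset.Nat.sum_antidiagonal_eq_sum_range_succ_mk]
  simp [Finset.sum_range_succ]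

lemma coeff_q (a b c : ℝ) :
    (C a + C b * X + C c * X ^ 2).coeff 0 = a ∧
    (C a + C b * X + C c * X ^ 2).coeff 1 = b ∧
    (C a + C b * X + C c * X ^ 2).coeff 2 = c := by
  refine ⟨?_, ?_, ?_⟩ <;> simp [coeff_C, coeff_X, coeff_X_pow]

lemma coeff_q_pow0 (a b c : ℝ) (N : ℕ) :
    ((C a + C b * X + C c * X ^ 2) ^ N).coeff 0 = a ^ N := by
  induction N with
  | zero => simp
  | succ N ih => rw [pow_succ, Polynomial.mul_coeff_zero, ih, (coeff_q a b c).1, pow_succ]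

lemma coeff_q_pow1 (a b c : ℝ) (N : ℕ) :
    ((C a + C b * X + C c * X ^ 2) ^ (N + 1)).coeff 1 = ((N : ℝ) + 1) * a ^ N * b := by
  obtain ⟨h0, h1, h2⟩ := coeff_q a b c
  induction N with
  | zero => simpa using h1
  | succ N ih =>
    rw [pow_succ, coeff_mul_one', ih, coeff_q_pow0, h0, h1]
    push_cast; ring

lemma coeff_q_pow2 (a b c : ℝ) (N : ℕ) :
    ((C a + C b * X + C c * X ^ 2) ^ (N + 2)).coeff 2 =
      ((N : ℝ) + 2) * a ^ (N + 1) * c + (((N : ℝ) + 2) * ((N : ℝ) + 1) / 2) * a ^ N * b ^ 2 := by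
  obtain ⟨h0, h1, h2⟩ := coeff_q a b c
  induction N with
  | zero =>
    rw [pow_two, coeff_mul_two', h0, h1, h2]; push_cast; ring
  | succ N ih =>
    rw [show N + 1 + 2 = (N + 2) + 1 from rfl, pow_succ, coeff_mul_two', ih,
      coeff_q_pow0, coeff_q_pow1, h0, h1, h2]
    push_cast; ring

lemma coeff2_pow (a b c : ℝ) (m : ℕ) :
    ((C a + C b * X + C c * X ^ 2) ^ (m + 1)).coeff 2 =
      ((m : ℝ) + 1) * a ^ m * c + (((m : ℝ) + 1) * (m : ℝ) / 2) * a ^ (m - 1) * b ^ 2 := by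
  cases m with
  | zero => simpa using (coeff_q a b c).2.2
  | succ M =>
    rw [show M + 1 + 1 = M + 2 from rfl, coeff_q_pow2]
    push_cast; ring_nf

-- ### geometry
variable {d : ℕ}

lemma proj_mem (V : Submodule ℝ (EuclideanSpace ℝ (Fin d))) (x : EuclideanSpace ℝ (Fin d)) :
    proj V x ∈ V := (V.orthogonalProjection x).2

lemma inner_proj_of_mem (V : Submodule ℝ (EuclideanSpace ℝ (Fin d)))
    {v : EuclideanSpace ℝ (Fin d)} (hv : v ∈ V) (w : EuclideanSpace ℝ (Fin d)) :
    ⟪v, proj V w⟫ = ⟪v, w⟫ := by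
  have h := Submodule.starProjection_inner_eq_zero (K := V) w v hv
  have : ⟪w - proj V w, v⟫ = (0:ℝ) := h
  rw [inner_sub_left] at this
  have c1 := real_inner_comm v ((proj V) w)
  have c2 := real_inner_comm v w
  linarith

lemma sum_sq_coords {m : ℕ} (w : EuclideanSpace ℝ (Fin m)) :
    ∑ i, (w i) ^ 2 = ‖w‖ ^ 2 := by
  rw [← real_inner_self_eq_norm_sq, PiLp.inner_apply]
  simp [pow_two]

lemma apply_eq_inner_single {m : ℕ} (w : EuclideanSpace ℝ (Fin m)) (i : Fin m) :
    ⟪w, EuclideanSpace.single i (1:ℝ)⟫ = w i := by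
  rw [EuclideanSpace.inner_single_right]; simp

lemma norm_proj_sq_eq_sum (V : Submodule ℝ (EuclideanSpace ℝ (Fin d)))
    [FiniteDimensional ℝ V] (w : EuclideanSpace ℝ (Fin d)) :
    ‖proj V w‖ ^ 2 = ∑ j, ⟪(stdOrthonormalBasis ℝ V j : EuclideanSpace ℝ (Fin d)), w⟫ ^ 2 := by
  set b := stdOrthonormalBasis ℝ V
  have h1 : ‖proj V w‖ = ‖V.orthogonalProjection w‖ := rfl
  rw [h1, ← b.repr.norm_map (V.orthogonalProjection w), ← sum_sq_coords]
  congr 1; funext j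
  congr 1
  rw [b.repr_apply_apply]
  have : ⟪b j, V.orthogonalProjection w⟫ = ⟪(b j : EuclideanSpace ℝ (Fin d)), proj V w⟫ :=
    Submodule.coe_inner V _ _
  rw [this, inner_proj_of_mem V (b j).2]

lemma trace_proj (V : Submodule ℝ (EuclideanSpace ℝ (Fin d))) [FiniteDimensional ℝ V]
    {k : ℕ} (hV : Module.finrank ℝ V = k) :
    ∑ i, ‖proj V (EuclideanSpace.single i (1:ℝ))‖ ^ 2 = (k : ℝ) := by
  set b := stdOrthonormalBasis ℝ V
  calc ∑ i, ‖proj V (EuclideanSpace.single i (1:ℝ))‖ ^ 2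
      = ∑ i, ∑ j, ⟪(b j : EuclideanSpace ℝ (Fin d)), EuclideanSpace.single i (1:ℝ)⟫ ^ 2 := by
        simp_rw [norm_proj_sq_eq_sum]; rfl
    _ = ∑ j, ∑ i, ((b j : EuclideanSpace ℝ (Fin d)) i) ^ 2 := by
        rw [Finset.sum_comm]
        simp_rw [apply_eq_inner_single]
    _ = ∑ j : Fin (Module.finrank ℝ V), (1:ℝ) := by
        refine Finset.sum_congr rfl fun j _ => ?_
        rw [sum_sq_coords]
        have : ‖(b j : EuclideanSpace ℝ (Fin d))‖ = 1 := b.orthonormal.1 j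
        rw [this]; norm_num
    _ = (k : ℝ) := by simp [hV]

lemma eval_q_norm (v u : EuclideanSpace ℝ (Fin d)) (r : ℝ) :
    eval r (C (‖v‖^2) + C (2*⟪v,u⟫) * X + C (‖u‖^2) * X^2) = ‖v + r • u‖^2 := by
  simp only [eval_add, eval_mul, eval_pow, eval_C, eval_X]
  rw [norm_add_sq_real, real_inner_smul_right, norm_smul]
  rw [Real.norm_eq_abs, mul_pow, sq_abs]
  ring

lemma nat_pow_pred_mul (a : ℝ) (m : ℕ) : (m:ℝ) * (a ^ (m-1) * a) = (m:ℝ) * a ^ m := by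
  cases m with
  | zero => simp
  | succ M => simp [pow_succ]

-- ### descent
lemma descent {k : ℕ} (D : Finset (Submodule ℝ (EuclideanSpace ℝ (Fin d))))
    (hdim : ∀ V ∈ D, Module.finrank ℝ V = k) (m : ℕ) (B : ℝ)
    (h : ∀ x : EuclideanSpace ℝ (Fin d),
      ∑ V ∈ D, ‖proj V x‖ ^ (2*(m+1)) = B * ‖x‖ ^ (2*(m+1)))
    (x : EuclideanSpace ℝ (Fin d)) :
    ((k:ℝ) + 2*m) * ∑ V ∈ D, ‖proj V x‖ ^ (2*m) = B * (((d:ℝ) + 2*m) * ‖x‖ ^ (2*m)) := by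
  classical
  let u : Fin d → EuclideanSpace ℝ (Fin d) := fun i => EuclideanSpace.single i (1:ℝ)
  let qV : Submodule ℝ (EuclideanSpace ℝ (Fin d)) → Fin d → ℝ[X] := fun V i =>
    C (‖proj V x‖^2) + C (2*⟪proj V x, proj V (u i)⟫) * X + C (‖proj V (u i)‖^2) * X^2
  let qR : Fin d → ℝ[X] := fun i =>
    C (‖x‖^2) + C (2*⟪x, u i⟫) * X + C (‖u i‖^2) * X^2
  -- polynomial identity per direction
  have poly_eq : ∀ i, (∑ V ∈ D, (qV V i) ^ (m+1)) = C B * (qR i) ^ (m+1) := by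
    intro i
    apply Polynomial.funext
    intro r
    rw [eval_finset_sum]
    have hR : eval r ((qR i) ^ (m+1)) = ‖x + r • u i‖ ^ (2*(m+1)) := by
      rw [eval_pow, eval_q_norm, ← pow_mul]
    have hL : ∀ V ∈ D, eval r ((qV V i) ^ (m+1)) = ‖proj V (x + r • u i)‖ ^ (2*(m+1)) := by
      intro V _
      rw [eval_pow, eval_q_norm]
      rw [show proj V x + r • proj V (u i) = proj V (x + r • u i) by
        rw [map_add, map_smul]]
      rw [← pow_mul]
    rw [Finset.sum_congr rfl hL, eval_mul, eval_C, hR, h (x + r • u i)]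
  -- take coefficient 2 and sum over directions
  have coeff_eq : ∀ i, ∑ V ∈ D, ((qV V i) ^ (m+1)).coeff 2 = B * ((qR i) ^ (m+1)).coeff 2 := by
    intro i
    have := congrArg (fun p => Polynomial.coeff p 2) (poly_eq i)
    simpa [Polynomial.finset_sum_coeff, coeff_C_mul] using this
  have sum_coeff : ∑ i, ∑ V ∈ D, ((qV V i) ^ (m+1)).coeff 2
      = B * ∑ i, ((qR i) ^ (m+1)).coeff 2 := by
    rw [Finset.mul_sum]
    exact Finset.sum_congr rfl fun i _ => coeff_eq i
  rw [Finset.sum_comm] at sum_coeff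
  -- compute LHS
  have hnormu : ∀ i, ‖u i‖ = 1 := fun i => by simp [u]
  have lhs_eq : ∀ V ∈ D, ∑ i, ((qV V i) ^ (m+1)).coeff 2
      = ((m:ℝ)+1) * (((k:ℝ) + 2*m) * (‖proj V x‖^2) ^ m) := by
    intro V hV
    have : ∀ i : Fin d, ((qV V i) ^ (m+1)).coeff 2 =
        ((m : ℝ) + 1) * (‖proj V x‖^2) ^ m * (‖proj V (u i)‖^2)
        + (((m : ℝ) + 1) * (m : ℝ) / 2) * (‖proj V x‖^2) ^ (m - 1)
            * (2*⟪proj V x, proj V (u i)⟫) ^ 2 := fun i => coeff2_pow _ _ _ m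
    rw [Finset.sum_congr rfl (fun i _ => this i), Finset.sum_add_distrib,
      ← Finset.mul_sum, ← Finset.mul_sum]
    have htr : ∑ i, ‖proj V (u i)‖ ^ 2 = (k:ℝ) := trace_proj V (hdim V hV)
    have hb : ∑ i, (2*⟪proj V x, proj V (u i)⟫) ^ 2 = 4 * ‖proj V x‖^2 := by
      have : ∀ i, (2*⟪proj V x, proj V (u i)⟫) ^ 2 = 4 * ((proj V x) i)^2 := by
        intro i
        rw [inner_proj_of_mem V (proj_mem V x) (u i), apply_eq_inner_single]
        ring
      rw [Finset.sum_congr rfl (fun i _ => this i), ← Finset.mul_sum, sum_sq_coords]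
    rw [htr, hb]
    have := nat_pow_pred_mul (‖proj V x‖^2) m
    nlinarith [this]
  have rhs_eq : ∑ i, ((qR i) ^ (m+1)).coeff 2
      = ((m:ℝ)+1) * (((d:ℝ) + 2*m) * (‖x‖^2) ^ m) := by
    have : ∀ i : Fin d, ((qR i) ^ (m+1)).coeff 2 =
        ((m : ℝ) + 1) * (‖x‖^2) ^ m * (‖u i‖^2)
        + (((m : ℝ) + 1) * (m : ℝ) / 2) * (‖x‖^2) ^ (m - 1)
            * (2*⟪x, u i⟫) ^ 2 := fun i => coeff2_pow _ _ _ m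
    rw [Finset.sum_congr rfl (fun i _ => this i), Finset.sum_add_distrib,
      ← Finset.mul_sum, ← Finset.mul_sum]
    have htr : ∑ i : Fin d, ‖u i‖ ^ 2 = (d:ℝ) := by
      simp [hnormu]
    have hb : ∑ i, (2*⟪x, u i⟫) ^ 2 = 4 * ‖x‖^2 := by
      have : ∀ i, (2*⟪x, u i⟫) ^ 2 = 4 * (x i)^2 := by
        intro i
        rw [apply_eq_inner_single]
        ring
      rw [Finset.sum_congr rfl (fun i _ => this i), ← Finset.mul_sum, sum_sq_coords]
    rw [htr, hb]
    have := nat_pow_pred_mul (‖x‖^2) m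
    nlinarith [this]
  rw [Finset.sum_congr rfl lhs_eq, rhs_eq] at sum_coeff
  have hm1 : ((m:ℝ) + 1) ≠ 0 := by positivity
  have e1 : ∑ V ∈ D, ((m:ℝ)+1) * (((k:ℝ) + 2*m) * (‖proj V x‖^2) ^ m)
      = ((m:ℝ)+1) * (((k:ℝ) + 2*m) * ∑ V ∈ D, ‖proj V x‖ ^ (2*m)) := by
    rw [Finset.mul_sum, Finset.mul_sum]
    exact Finset.sum_congr rfl fun V _ => by rw [← pow_mul]
  rw [e1, show (‖x‖^2) ^ m = ‖x‖ ^ (2*m) by rw [← pow_mul]] at sum_coeff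
  refine mul_left_cancel₀ hm1 ?_
  rw [sum_coeff]; ring

lemma poch_eq_prod (a : ℝ) (m : ℕ) : poch a m = ∏ j ∈ Finset.range m, (a + j) := by
  induction m with
  | zero => simp [poch]
  | succ m ih => rw [poch, ascPochhammer_succ_eval, ← poch, ih, Finset.prod_range_succ]

lemma poch_pos {a : ℝ} (ha : 0 < a) (m : ℕ) : 0 < poch a m := by
  rw [poch_eq_prod]
  exact Finset.prod_pos fun j _ => by positivity

lemma moments {t k : ℕ} (hk : 0 < k) (hkd : k ≤ d)
    (D : Finset (Submodule ℝ (EuclideanSpace ℝ (Fin d))))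
    (hdim : ∀ V ∈ D, Module.finrank ℝ V = k) (A : ℝ)
    (hA : ∀ x : EuclideanSpace ℝ (Fin d), ∑ V ∈ D, ‖proj V x‖ ^ (2*t) = A * ‖x‖ ^ (2*t)) :
    ∀ m ≤ t, ∀ x : EuclideanSpace ℝ (Fin d), ∑ V ∈ D, ‖proj V x‖ ^ (2*m)
      = (D.card : ℝ) * (poch ((k:ℝ)/2) m / poch ((d:ℝ)/2) m) * ‖x‖ ^ (2*m) := by
  have hd : 0 < d := lt_of_lt_of_le hk hkd
  set f : ℕ → ℝ := fun m => A * ∏ j ∈ Finset.Ico m t, (((d:ℝ)+2*j)/((k:ℝ)+2*j)) with hf_def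
  have hkpos : ∀ j : ℕ, (0:ℝ) < (k:ℝ) + 2*j := fun j => by positivity
  have hdpos : ∀ j : ℕ, (0:ℝ) < (d:ℝ) + 2*j := fun j => by positivity
  have step : ∀ j, j ≤ t → ∀ x : EuclideanSpace ℝ (Fin d),
      ∑ V ∈ D, ‖proj V x‖ ^ (2*(t-j)) = f (t-j) * ‖x‖ ^ (2*(t-j)) := by
    intro j
    induction j with
    | zero =>
      intro _ x
      simp only [Nat.sub_zero, hf_def, Finset.Ico_self, Finset.prod_empty, mul_one]
      exact hA x
    | succ j ih =>
      intro hj x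
      have hj' : j ≤ t := by omega
      set m := t - (j+1) with hm_def
      have hmt : t - j = m + 1 := by omega
      have hmlt : m < t := by omega
      have prev : ∀ x : EuclideanSpace ℝ (Fin d),
          ∑ V ∈ D, ‖proj V x‖ ^ (2*(m+1)) = f (m+1) * ‖x‖ ^ (2*(m+1)) := by
        intro x; have := ih hj' x; rwa [hmt] at this
      have hdes := descent D hdim m (f (m+1)) prev x
      have hfm : f m = (((d:ℝ)+2*m)/((k:ℝ)+2*m)) * f (m+1) := by
        simp only [hf_def]
        rw [Finset.prod_eq_prod_Ico_succ_bot hmlt]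
        ring
      have hknz : ((k:ℝ) + 2*m) ≠ 0 := ne_of_gt (hkpos m)
      rw [hfm]
      field_simp
      linarith [hdes]
  have hf : ∀ m, m ≤ t → ∀ x : EuclideanSpace ℝ (Fin d),
      ∑ V ∈ D, ‖proj V x‖ ^ (2*m) = f m * ‖x‖ ^ (2*m) := by
    intro m hm x
    have := step (t - m) (by omega) x
    rwa [show t - (t - m) = m by omega] at this
  have hf0 : f 0 = (D.card : ℝ) := by
    have := hf 0 (Nat.zero_le t) 0
    simpa using this.symm
  intro m hm x
  rw [hf m hm x]
  congr 1
  -- f m = D.card * (poch (k/2) m / poch (d/2) m)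
  have hsplit : (∏ j ∈ Finset.Ico 0 t, (((d:ℝ)+2*j)/((k:ℝ)+2*j)))
      = (∏ j ∈ Finset.Ico 0 m, (((d:ℝ)+2*j)/((k:ℝ)+2*j)))
        * ∏ j ∈ Finset.Ico m t, (((d:ℝ)+2*j)/((k:ℝ)+2*j)) :=
    (Finset.prod_Ico_consecutive _ (Nat.zero_le m) hm).symm
  have hf0' : A * ((∏ j ∈ Finset.Ico 0 m, (((d:ℝ)+2*j)/((k:ℝ)+2*j)))
      * ∏ j ∈ Finset.Ico m t, (((d:ℝ)+2*j)/((k:ℝ)+2*j))) = (D.card : ℝ) := by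
    rw [← hsplit]; simpa [hf_def] using hf0
  have hprod_pos : (0:ℝ) < ∏ j ∈ Finset.Ico 0 m, (((d:ℝ)+2*j)/((k:ℝ)+2*j)) :=
    Finset.prod_pos fun j _ => div_pos (hdpos j) (hkpos j)
  have hfm_eq : f m = (D.card : ℝ) * ∏ j ∈ Finset.Ico 0 m, (((k:ℝ)+2*j)/((d:ℝ)+2*j)) := by
    have hinv : ∏ j ∈ Finset.Ico 0 m, (((k:ℝ)+2*j)/((d:ℝ)+2*j))
        = (∏ j ∈ Finset.Ico 0 m, (((d:ℝ)+2*j)/((k:ℝ)+2*j)))⁻¹ := by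
      rw [← Finset.prod_inv_distrib]
      exact Finset.prod_congr rfl fun j _ => by
        rw [inv_div]
    have hfm' : f m = (D.card : ℝ) / ∏ j ∈ Finset.Ico 0 m, (((d:ℝ)+2*j)/((k:ℝ)+2*j)) := by
      rw [hf_def, eq_div_iff (ne_of_gt hprod_pos), ← hf0']
      ring
    rw [hfm', hinv, div_eq_mul_inv]
  rw [hfm_eq]
  congr 1
  rw [show Finset.Ico 0 m = Finset.range m from by rw [Finset.range_eq_Ico]]
  rw [poch_eq_prod, poch_eq_prod, ← Finset.prod_div_distrib]
  exact Finset.prod_congr rfl fun j _ => by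
    have h1 : ((d:ℝ)/2 + j) ≠ 0 := by positivity
    field_simp


/-- Corollary: lifting equal-weight spherical designs through an
equal-weight tight `t`-fusion frame.  If `D ⊆ G_{k,d}` is an equal-weight tight
`t`-fusion frame and each `Y_V ⊆ S(V)` is a spherical `s`-design (moment form) with
`|Y_V| = n` independent of `V`, then the union multiset satisfies the spherical
design moment identities on `S^{d−1}` up to degree `r = min {s, 2t+1}`. -/
theorem stmt2 (t s d k : ℕ) (ht : 0 < t) (hs : 0 < s) (hk : 0 < k) (hkd : k ≤ d)
    (D : Finset (Submodule ℝ (EuclideanSpace ℝ (Fin d))))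
    (hdim : ∀ V ∈ D, Module.finrank ℝ V = k)
    (htff : ∃ A : ℝ, 0 < A ∧ ∀ x : EuclideanSpace ℝ (Fin d),
      ∑ V ∈ D, ‖proj V x‖ ^ (2 * t) = A * ‖x‖ ^ (2 * t))
    (Y : Submodule ℝ (EuclideanSpace ℝ (Fin d)) → Finset (EuclideanSpace ℝ (Fin d)))
    (hY : ∀ V ∈ D, ∀ z ∈ Y V, z ∈ V ∧ ‖z‖ = 1)
    (n : ℕ) (hcard : ∀ V ∈ D, (Y V).card = n)
    (hdesign : ∀ V ∈ D, ∀ y : EuclideanSpace ℝ (Fin d), ∀ m : ℕ, m ≤ s →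
      ∑ z ∈ Y V, ⟪z, proj V y⟫ ^ m =
        if Even m then
          (n : ℝ) * (poch (1 / 2) (m / 2) / poch ((k : ℝ) / 2) (m / 2)) * ‖proj V y‖ ^ m
        else 0) :
    ∀ y : EuclideanSpace ℝ (Fin d), ∀ l : ℕ, l ≤ min s (2 * t + 1) →
      ∑ V ∈ D, ∑ z ∈ Y V, ⟪z, y⟫ ^ l =
        if Even l then
          (D.card : ℝ) * (n : ℝ) *
            (poch (1 / 2) (l / 2) / poch ((d : ℝ) / 2) (l / 2)) * ‖y‖ ^ l
        else 0 := by
  obtain ⟨A, hApos, hA⟩ := htff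
  intro y l hl
  have hls : l ≤ s := le_trans hl (min_le_left _ _)
  have hlt : l ≤ 2 * t + 1 := le_trans hl (min_le_right _ _)
  have hinner : ∀ V ∈ D, ∑ z ∈ Y V, ⟪z, y⟫ ^ l = ∑ z ∈ Y V, ⟪z, proj V y⟫ ^ l := by
    intro V hV
    refine Finset.sum_congr rfl fun z hz => ?_
    rw [inner_proj_of_mem V (hY V hV z hz).1 y]
  by_cases he : Even l
  · obtain ⟨m, hm⟩ := he
    have hlm : l = 2 * m := by omega
    have hdiv : l / 2 = m := by omega
    have hmt : m ≤ t := by omega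
    simp only [show Even l from ⟨m, hm⟩, if_true]
    have hsum : ∀ V ∈ D, ∑ z ∈ Y V, ⟪z, y⟫ ^ l
        = (n : ℝ) * (poch (1/2) m / poch ((k:ℝ)/2) m) * ‖proj V y‖ ^ l := by
      intro V hV
      rw [hinner V hV, hdesign V hV y l hls]
      simp only [show Even l from ⟨m, hm⟩, if_true, hdiv]
    rw [Finset.sum_congr rfl hsum]
    have hmom := moments hk hkd D hdim A hA m hmt y
    have hstep : ∑ V ∈ D, (n:ℝ) * (poch (1/2) m / poch ((k:ℝ)/2) m) * ‖proj V y‖ ^ l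
        = (n:ℝ) * (poch (1/2) m / poch ((k:ℝ)/2) m)
            * ((D.card : ℝ) * (poch ((k:ℝ)/2) m / poch ((d:ℝ)/2) m) * ‖y‖ ^ (2*m)) := by
      rw [← Finset.mul_sum, ← hmom, hlm]
    rw [hstep, hdiv, hlm]
    have hk' : (0:ℝ) < (k:ℝ)/2 := by
      have : (0:ℝ) < (k:ℝ) := by exact_mod_cast hk
      linarith
    have hd' : (0:ℝ) < (d:ℝ)/2 := by
      have : (0:ℝ) < (d:ℝ) := by exact_mod_cast lt_of_lt_of_le hk hkd
      linarith
    have hpk : poch ((k:ℝ)/2) m ≠ 0 := ne_of_gt (poch_pos hk' m)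
    have hpd : poch ((d:ℝ)/2) m ≠ 0 := ne_of_gt (poch_pos hd' m)
    field_simp
  · rw [if_neg he]
    have hzero : ∀ V ∈ D, ∑ z ∈ Y V, ⟪z, proj V y⟫ ^ l = 0 := fun V hV => by
      rw [hdesign V hV y l hls, if_neg he]
    rw [Finset.sum_congr rfl hinner, Finset.sum_congr rfl hzero, Finset.sum_const, smul_zero]
end

section
/- Let d ≥ 4 and let X be a finite set of 2-dimensional linear subspaces of ℝ^d that is B_d-invariant. Then the function F_X(x) := ∑_{W∈X} ‖P_W x‖^4 satisfies F_X(gx) = F_X(x) for all g ∈ B_d and x ∈ ℝ^d, and there exist constants α, β ∈ ℝ such that F_X(x) = α·∑_{i=1}^d x_i^4 + β·(∑_{i=1}^d x_i^2)^2 for all x ∈ ℝ^d. -/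
open scoped BigOperators

/-- `g` is a signed permutation matrix: `g = diag(s)·σ` with `s ∈ {±1}^d` and `σ`
a permutation matrix (the hyperoctahedral group `B_d ⊆ O(d)`). -/
def IsSignedPerm {d : ℕ} (g : Matrix (Fin d) (Fin d) ℝ) : Prop :=
  ∃ (σ : Equiv.Perm (Fin d)) (s : Fin d → ℝ),
    (∀ i, s i = 1 ∨ s i = -1) ∧ ∀ i j, g i j = if i = σ j then s i else 0

namespace Stmt4Aux

open scoped RealInnerProductSpace
open Matrix

variable {d : ℕ}

lemma apply_coord (g : Matrix (Fin d) (Fin d) ℝ) (σ : Equiv.Perm (Fin d)) (s : Fin d → ℝ)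
    (hg : ∀ i j, g i j = if i = σ j then s i else 0) (x : EuclideanSpace ℝ (Fin d)) (m : Fin d) :
    (Matrix.toEuclideanLin g x) m = s m * x (σ.symm m) := by
  show ∑ n, g m n * x n = _
  rw [Finset.sum_congr rfl (fun n _ => by rw [hg])]
  have : ∀ n : Fin d, (if m = σ n then s m else 0) * x n
      = (if σ.symm m = n then s m * x n else 0) := by
    intro n
    by_cases h : σ.symm m = n
    · simp [h.symm, Equiv.apply_symm_apply, if_pos]
    · rw [if_neg h, if_neg, zero_mul]
      intro hc; exact h (by rw [hc]; simp)
  rw [Finset.sum_congr rfl (fun n _ => this n), Finset.sum_ite_eq]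
  simp

lemma transpose_entries (g : Matrix (Fin d) (Fin d) ℝ) (σ : Equiv.Perm (Fin d)) (s : Fin d → ℝ)
    (hg : ∀ i j, g i j = if i = σ j then s i else 0) :
    ∀ i j, gᵀ i j = if i = σ.symm j then s (σ i) else 0 := by
  intro i j
  rw [Matrix.transpose_apply, hg]
  by_cases h : i = σ.symm j
  · rw [if_pos, if_pos h]
    · subst h; rw [Equiv.apply_symm_apply]
    · subst h; rw [Equiv.apply_symm_apply]
  · rw [if_neg, if_neg h]
    intro hc; exact h (by rw [hc]; simp)

lemma transpose_signedPerm {g : Matrix (Fin d) (Fin d) ℝ} (hg : IsSignedPerm g) :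
    IsSignedPerm gᵀ := by
  obtain ⟨σ, s, hs, hgij⟩ := hg
  exact ⟨σ.symm, fun i => s (σ i), fun i => hs (σ i), transpose_entries g σ s hgij⟩

lemma sq_one {s : Fin d → ℝ} (hs : ∀ i, s i = 1 ∨ s i = -1) (i : Fin d) : s i * s i = 1 := by
  rcases hs i with h | h <;> rw [h] <;> norm_num

lemma left_inverse_aux (g : Matrix (Fin d) (Fin d) ℝ) (σ : Equiv.Perm (Fin d)) (s : Fin d → ℝ)
    (hs : ∀ i, s i = 1 ∨ s i = -1)
    (hg : ∀ i j, g i j = if i = σ j then s i else 0) (x : EuclideanSpace ℝ (Fin d)) :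
    Matrix.toEuclideanLin gᵀ (Matrix.toEuclideanLin g x) = x := by
  ext m
  rw [apply_coord gᵀ σ.symm (fun i => s (σ i)) (transpose_entries g σ s hg),
    apply_coord g σ s hg]
  simp only [Equiv.symm_symm, Equiv.symm_apply_apply]
  rw [← mul_assoc, sq_one hs, one_mul]

lemma right_inverse_aux (g : Matrix (Fin d) (Fin d) ℝ) (σ : Equiv.Perm (Fin d)) (s : Fin d → ℝ)
    (hs : ∀ i, s i = 1 ∨ s i = -1)
    (hg : ∀ i j, g i j = if i = σ j then s i else 0) (x : EuclideanSpace ℝ (Fin d)) :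
    Matrix.toEuclideanLin g (Matrix.toEuclideanLin gᵀ x) = x := by
  ext m
  rw [apply_coord g σ s hg,
    apply_coord gᵀ σ.symm (fun i => s (σ i)) (transpose_entries g σ s hg)]
  simp only [Equiv.symm_symm, Equiv.apply_symm_apply]
  rw [← mul_assoc, sq_one hs, one_mul]

/-- The linear isometry equivalence induced by a signed permutation matrix. -/
noncomputable def spIso (g : Matrix (Fin d) (Fin d) ℝ) (σ : Equiv.Perm (Fin d)) (s : Fin d → ℝ)
    (hs : ∀ i, s i = 1 ∨ s i = -1)
    (hg : ∀ i j, g i j = if i = σ j then s i else 0) :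
    EuclideanSpace ℝ (Fin d) ≃ₗᵢ[ℝ] EuclideanSpace ℝ (Fin d) where
  toLinearEquiv := LinearEquiv.ofLinear (Matrix.toEuclideanLin g) (Matrix.toEuclideanLin gᵀ)
    (LinearMap.ext (right_inverse_aux g σ s hs hg))
    (LinearMap.ext (left_inverse_aux g σ s hs hg))
  norm_map' := by
    intro x
    rw [EuclideanSpace.norm_eq, EuclideanSpace.norm_eq]
    congr 1
    show ∑ m, ‖(Matrix.toEuclideanLin g x) m‖ ^ 2 = _
    rw [Finset.sum_congr rfl (fun m _ => by rw [apply_coord g σ s hg])]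
    have : ∀ m, ‖s m * x (σ.symm m)‖ ^ 2 = ‖x (σ.symm m)‖ ^ 2 := by
      intro m
      rw [norm_mul, mul_pow]
      rcases hs m with h | h <;> rw [h] <;> norm_num
    rw [Finset.sum_congr rfl (fun m _ => this m)]
    exact Equiv.sum_comp σ.symm (fun i => ‖x i‖ ^ 2)

lemma spIso_apply (g : Matrix (Fin d) (Fin d) ℝ) (σ : Equiv.Perm (Fin d)) (s : Fin d → ℝ)
    (hs : ∀ i, s i = 1 ∨ s i = -1)
    (hg : ∀ i j, g i j = if i = σ j then s i else 0) (x : EuclideanSpace ℝ (Fin d)) :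
    spIso g σ s hs hg x = Matrix.toEuclideanLin g x := by
  simp [spIso, LinearIsometryEquiv.coe_mk, LinearEquiv.ofLinear_apply]

lemma map_eq (g : Matrix (Fin d) (Fin d) ℝ) (σ : Equiv.Perm (Fin d)) (s : Fin d → ℝ)
    (hs : ∀ i, s i = 1 ∨ s i = -1)
    (hg : ∀ i j, g i j = if i = σ j then s i else 0)
    (W : Submodule ℝ (EuclideanSpace ℝ (Fin d))) :
    Submodule.map (Matrix.toEuclideanLin g) W
      = Submodule.map ((spIso g σ s hs hg).toLinearEquiv :
          EuclideanSpace ℝ (Fin d) →ₗ[ℝ] EuclideanSpace ℝ (Fin d)) W := by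
  congr 1

/-- key equivariance of the projection -/
lemma proj_map_apply (g : Matrix (Fin d) (Fin d) ℝ) (σ : Equiv.Perm (Fin d)) (s : Fin d → ℝ)
    (hs : ∀ i, s i = 1 ∨ s i = -1)
    (hg : ∀ i j, g i j = if i = σ j then s i else 0)
    (W : Submodule ℝ (EuclideanSpace ℝ (Fin d))) (x : EuclideanSpace ℝ (Fin d)) :
    proj (Submodule.map (Matrix.toEuclideanLin g) W) (Matrix.toEuclideanLin g x)
      = spIso g σ s hs hg (proj W x) := by
  rw [map_eq g σ s hs hg W]
  have h := Submodule.starProjection_map_apply (𝕜 := ℝ) (spIso g σ s hs hg) W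
    (Matrix.toEuclideanLin g x)
  show _ = _
  rw [show (proj (Submodule.map ((spIso g σ s hs hg).toLinearEquiv :
      EuclideanSpace ℝ (Fin d) →ₗ[ℝ] EuclideanSpace ℝ (Fin d)) W)
      (Matrix.toEuclideanLin g x) : EuclideanSpace ℝ (Fin d))
      = (Submodule.map ((spIso g σ s hs hg).toLinearEquiv :
        EuclideanSpace ℝ (Fin d) →ₗ[ℝ] EuclideanSpace ℝ (Fin d)) W).starProjection
        (Matrix.toEuclideanLin g x) from rfl, h]
  congr 1
  rw [show (spIso g σ s hs hg).symm (Matrix.toEuclideanLin g x)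
      = Matrix.toEuclideanLin gᵀ (Matrix.toEuclideanLin g x) from rfl,
    left_inverse_aux g σ s hs hg]
  rfl


lemma map_map_transpose (g : Matrix (Fin d) (Fin d) ℝ) (σ : Equiv.Perm (Fin d)) (s : Fin d → ℝ)
    (hs : ∀ i, s i = 1 ∨ s i = -1)
    (hg : ∀ i j, g i j = if i = σ j then s i else 0)
    (W : Submodule ℝ (EuclideanSpace ℝ (Fin d))) :
    Submodule.map (Matrix.toEuclideanLin gᵀ)
      (Submodule.map (Matrix.toEuclideanLin g) W) = W := by
  rw [← Submodule.map_comp]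
  have : Matrix.toEuclideanLin gᵀ ∘ₗ Matrix.toEuclideanLin g
      = (LinearMap.id : EuclideanSpace ℝ (Fin d) →ₗ[ℝ] EuclideanSpace ℝ (Fin d)) :=
    LinearMap.ext (left_inverse_aux g σ s hs hg)
  rw [this, Submodule.map_id]

lemma map_transpose_map (g : Matrix (Fin d) (Fin d) ℝ) (σ : Equiv.Perm (Fin d)) (s : Fin d → ℝ)
    (hs : ∀ i, s i = 1 ∨ s i = -1)
    (hg : ∀ i j, g i j = if i = σ j then s i else 0)
    (W : Submodule ℝ (EuclideanSpace ℝ (Fin d))) :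
    Submodule.map (Matrix.toEuclideanLin g)
      (Submodule.map (Matrix.toEuclideanLin gᵀ) W) = W := by
  rw [← Submodule.map_comp]
  have : Matrix.toEuclideanLin g ∘ₗ Matrix.toEuclideanLin gᵀ
      = (LinearMap.id : EuclideanSpace ℝ (Fin d) →ₗ[ℝ] EuclideanSpace ℝ (Fin d)) :=
    LinearMap.ext (right_inverse_aux g σ s hs hg)
  rw [this, Submodule.map_id]

/-- reindexing a sum over the invariant family by `W ↦ gW`. -/
lemma sum_reindex (X : Finset (Submodule ℝ (EuclideanSpace ℝ (Fin d))))
    (hinv : ∀ g : Matrix (Fin d) (Fin d) ℝ, IsSignedPerm g →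
      ∀ W ∈ X, Submodule.map (Matrix.toEuclideanLin g) W ∈ X)
    (g : Matrix (Fin d) (Fin d) ℝ) (σ : Equiv.Perm (Fin d)) (s : Fin d → ℝ)
    (hs : ∀ i, s i = 1 ∨ s i = -1)
    (hg : ∀ i j, g i j = if i = σ j then s i else 0)
    (F : Submodule ℝ (EuclideanSpace ℝ (Fin d)) → ℝ) :
    ∑ W ∈ X, F (Submodule.map (Matrix.toEuclideanLin g) W) = ∑ W ∈ X, F W := by
  refine Finset.sum_nbij' (fun W => Submodule.map (Matrix.toEuclideanLin g) W)
    (fun W => Submodule.map (Matrix.toEuclideanLin gᵀ) W)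
    (fun W hW => hinv g ⟨σ, s, hs, hg⟩ W hW)
    (fun W hW => hinv gᵀ (transpose_signedPerm ⟨σ, s, hs, hg⟩) W hW)
    (fun W _ => map_map_transpose g σ s hs hg W)
    (fun W _ => map_transpose_map g σ s hs hg W)
    (fun W _ => rfl)

/-- Part 1: invariance of F_X. -/
lemma part1 (X : Finset (Submodule ℝ (EuclideanSpace ℝ (Fin d))))
    (hinv : ∀ g : Matrix (Fin d) (Fin d) ℝ, IsSignedPerm g →
      ∀ W ∈ X, Submodule.map (Matrix.toEuclideanLin g) W ∈ X)
    (g : Matrix (Fin d) (Fin d) ℝ) (hg : IsSignedPerm g)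
    (x : EuclideanSpace ℝ (Fin d)) :
    ∑ W ∈ X, ‖proj W (Matrix.toEuclideanLin g x)‖ ^ 4 = ∑ W ∈ X, ‖proj W x‖ ^ 4 := by
  obtain ⟨σ, s, hs, hgij⟩ := hg
  rw [← sum_reindex X hinv g σ s hs hgij
    (fun W => ‖proj W (Matrix.toEuclideanLin g x)‖ ^ 4)]
  refine Finset.sum_congr rfl (fun W _ => ?_)
  rw [proj_map_apply g σ s hs hgij W x, LinearIsometryEquiv.norm_map]


/-- matrix entries of the projection -/
noncomputable def pm (W : Submodule ℝ (EuclideanSpace ℝ (Fin d))) (i j : Fin d) : ℝ :=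
  (proj W (EuclideanSpace.single i 1)) j

lemma coord_sum {ι : Type*} [DecidableEq ι] (s : Finset ι) (f : ι → EuclideanSpace ℝ (Fin d)) (m : Fin d) :
    (∑ i ∈ s, f i) m = ∑ i ∈ s, f i m := by
  induction s using Finset.induction with
  | empty => rfl
  | insert _ _ h ih => rw [Finset.sum_insert h, Finset.sum_insert h, ← ih]; rfl

lemma eq_sum_single (x : EuclideanSpace ℝ (Fin d)) :
    x = ∑ i, x i • EuclideanSpace.single i (1:ℝ) := by
  ext m
  rw [coord_sum]
  simp [EuclideanSpace.single_apply]

lemma proj_apply_coord (W : Submodule ℝ (EuclideanSpace ℝ (Fin d)))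
    (x : EuclideanSpace ℝ (Fin d)) (j : Fin d) :
    (proj W x) j = ∑ i, x i * pm W i j := by
  conv_lhs => rw [eq_sum_single x, map_sum, coord_sum]
  refine Finset.sum_congr rfl fun i _ => ?_
  rw [_root_.map_smul]
  rfl

lemma norm_sq_proj (W : Submodule ℝ (EuclideanSpace ℝ (Fin d))) (x : EuclideanSpace ℝ (Fin d)) :
    ‖proj W x‖ ^ 2 = ⟪proj W x, x⟫ := by
  have h := Submodule.inner_orthogonalProjectionOnto_eq_of_mem_right (𝕜 := ℝ) (K := W)
    (W.orthogonalProjection x) x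
  show ‖(W.subtype ∘ₗ (W.orthogonalProjection).toLinearMap) x‖ ^ 2
    = ⟪((W.subtype ∘ₗ (W.orthogonalProjection).toLinearMap) x), x⟫
  simp only [LinearMap.coe_comp, Function.comp_apply, Submodule.coe_subtype,
    ContinuousLinearMap.coe_coe]
  rw [← real_inner_self_eq_norm_sq, ← Submodule.coe_inner, h, real_inner_comm]

lemma normsq_eq (W : Submodule ℝ (EuclideanSpace ℝ (Fin d))) (x : EuclideanSpace ℝ (Fin d)) :
    ‖proj W x‖ ^ 2 = ∑ i, ∑ j, pm W i j * (x i * x j) := by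
  rw [norm_sq_proj]
  have : ⟪proj W x, x⟫ = ∑ j, (proj W x) j * x j := by
    rw [PiLp.inner_apply]
    exact Finset.sum_congr rfl fun j _ => by rw [RCLike.inner_apply, conj_trivial, mul_comm]
  rw [this, Finset.sum_congr rfl fun j (_ : j ∈ Finset.univ) => by rw [proj_apply_coord W x j]]
  rw [Finset.sum_comm]
  refine Finset.sum_congr rfl fun i _ => ?_
  rw [Finset.sum_mul]
  exact Finset.sum_congr rfl fun j _ => by ring


/-- the coefficient tensor of `F_X`. -/
noncomputable def Cc (X : Finset (Submodule ℝ (EuclideanSpace ℝ (Fin d))))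
    (i j k l : Fin d) : ℝ :=
  ∑ W ∈ X, pm W i j * pm W k l

lemma fx_eq (X : Finset (Submodule ℝ (EuclideanSpace ℝ (Fin d))))
    (x : EuclideanSpace ℝ (Fin d)) :
    ∑ W ∈ X, ‖proj W x‖ ^ 4
      = ∑ i, ∑ j, ∑ k, ∑ l, Cc X i j k l * (x i * x j * x k * x l) := by
  have h1 : ∀ W : Submodule ℝ (EuclideanSpace ℝ (Fin d)), ‖proj W x‖ ^ 4
      = ∑ i, ∑ j, ∑ k, ∑ l, (pm W i j * (x i * x j)) * (pm W k l * (x k * x l)) := by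
    intro W
    have h2 : ‖proj W x‖ ^ 4 = (‖proj W x‖ ^ 2) * (‖proj W x‖ ^ 2) := by ring
    rw [h2, normsq_eq, Finset.sum_mul]
    refine Finset.sum_congr rfl fun i _ => ?_
    rw [Finset.sum_mul]
    refine Finset.sum_congr rfl fun j _ => ?_
    rw [Finset.mul_sum]
    refine Finset.sum_congr rfl fun k _ => ?_
    rw [Finset.mul_sum]
  rw [Finset.sum_congr rfl fun W _ => h1 W, Finset.sum_comm]
  refine Finset.sum_congr rfl fun i _ => ?_
  rw [Finset.sum_comm]
  refine Finset.sum_congr rfl fun j _ => ?_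
  rw [Finset.sum_comm]
  refine Finset.sum_congr rfl fun k _ => ?_
  rw [Finset.sum_comm]
  refine Finset.sum_congr rfl fun l _ => ?_
  unfold Cc
  rw [Finset.sum_mul]
  exact Finset.sum_congr rfl fun W _ => by ring

lemma g_single (g : Matrix (Fin d) (Fin d) ℝ) (σ : Equiv.Perm (Fin d)) (s : Fin d → ℝ)
    (hg : ∀ i j, g i j = if i = σ j then s i else 0) (i : Fin d) :
    Matrix.toEuclideanLin g (EuclideanSpace.single i 1)
      = s (σ i) • EuclideanSpace.single (σ i) (1:ℝ) := by
  ext m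
  rw [apply_coord g σ s hg]
  show s m * (EuclideanSpace.single i (1:ℝ)) (σ.symm m)
    = s (σ i) * (EuclideanSpace.single (σ i) (1:ℝ)) m
  rw [EuclideanSpace.single_apply, EuclideanSpace.single_apply]
  by_cases h : m = σ i
  · subst h
    rw [if_pos (by simp), if_pos rfl]
  · rw [if_neg (fun hc => h (by rw [← hc]; simp)), if_neg h, mul_zero, mul_zero]

lemma pm_map (g : Matrix (Fin d) (Fin d) ℝ) (σ : Equiv.Perm (Fin d)) (s : Fin d → ℝ)
    (hs : ∀ i, s i = 1 ∨ s i = -1)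
    (hg : ∀ i j, g i j = if i = σ j then s i else 0)
    (W : Submodule ℝ (EuclideanSpace ℝ (Fin d))) (i j : Fin d) :
    pm (Submodule.map (Matrix.toEuclideanLin g) W) (σ i) (σ j)
      = s (σ i) * s (σ j) * pm W i j := by
  unfold pm
  have h1 : EuclideanSpace.single (σ i) (1:ℝ)
      = s (σ i) • Matrix.toEuclideanLin g (EuclideanSpace.single i 1) := by
    rw [g_single g σ s hg, smul_smul, sq_one hs, one_smul]
  rw [h1, _root_.map_smul]
  show s (σ i) * ((proj (Submodule.map (Matrix.toEuclideanLin g) W)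
      (Matrix.toEuclideanLin g (EuclideanSpace.single i 1))) (σ j)) = _
  rw [proj_map_apply g σ s hs hg W, spIso_apply, apply_coord g σ s hg,
    Equiv.symm_apply_apply]
  ring

lemma Cc_equivariant (X : Finset (Submodule ℝ (EuclideanSpace ℝ (Fin d))))
    (hinv : ∀ g : Matrix (Fin d) (Fin d) ℝ, IsSignedPerm g →
      ∀ W ∈ X, Submodule.map (Matrix.toEuclideanLin g) W ∈ X)
    (g : Matrix (Fin d) (Fin d) ℝ) (σ : Equiv.Perm (Fin d)) (s : Fin d → ℝ)
    (hs : ∀ i, s i = 1 ∨ s i = -1)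
    (hg : ∀ i j, g i j = if i = σ j then s i else 0) (i j k l : Fin d) :
    Cc X (σ i) (σ j) (σ k) (σ l)
      = s (σ i) * s (σ j) * s (σ k) * s (σ l) * Cc X i j k l := by
  unfold Cc
  rw [← sum_reindex X hinv g σ s hs hg (fun W => pm W (σ i) (σ j) * pm W (σ k) (σ l)),
    Finset.mul_sum]
  refine Finset.sum_congr rfl fun W _ => ?_
  rw [pm_map g σ s hs hg W i j, pm_map g σ s hs hg W k l]
  ring

lemma Cc_perm (X : Finset (Submodule ℝ (EuclideanSpace ℝ (Fin d))))
    (hinv : ∀ g : Matrix (Fin d) (Fin d) ℝ, IsSignedPerm g →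
      ∀ W ∈ X, Submodule.map (Matrix.toEuclideanLin g) W ∈ X)
    (σ : Equiv.Perm (Fin d)) (i j k l : Fin d) :
    Cc X (σ i) (σ j) (σ k) (σ l) = Cc X i j k l := by
  have h := Cc_equivariant X hinv
    (Matrix.of fun i j => if i = σ j then (1:ℝ) else 0) σ (fun _ => (1:ℝ))
    (fun _ => Or.inl rfl) (fun _ _ => rfl) i j k l
  simpa using h

lemma Cc_sign (X : Finset (Submodule ℝ (EuclideanSpace ℝ (Fin d))))
    (hinv : ∀ g : Matrix (Fin d) (Fin d) ℝ, IsSignedPerm g →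
      ∀ W ∈ X, Submodule.map (Matrix.toEuclideanLin g) W ∈ X)
    (m : Fin d) (i j k l : Fin d) :
    Cc X i j k l
      = (if i = m then (-1:ℝ) else 1) * (if j = m then (-1:ℝ) else 1)
        * (if k = m then (-1:ℝ) else 1) * (if l = m then (-1:ℝ) else 1) * Cc X i j k l := by
  set s : Fin d → ℝ := fun n => if n = m then -1 else 1 with hsdef
  have hs : ∀ n, s n = 1 ∨ s n = -1 := by
    intro n
    by_cases h : n = m
    · right; simp [hsdef, h]
    · left; simp [hsdef, h]
  have h := Cc_equivariant X hinv
    (Matrix.of fun i j => if i = (Equiv.refl (Fin d)) j then s i else 0)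
    (Equiv.refl (Fin d)) s hs (fun _ _ => rfl) i j k l
  simpa [hsdef] using h


lemma Cc_vanish (X : Finset (Submodule ℝ (EuclideanSpace ℝ (Fin d))))
    (hinv : ∀ g : Matrix (Fin d) (Fin d) ℝ, IsSignedPerm g →
      ∀ W ∈ X, Submodule.map (Matrix.toEuclideanLin g) W ∈ X)
    (i j k l : Fin d)
    (h : ¬((i = j ∧ k = l) ∨ (i = k ∧ j = l) ∨ (i = l ∧ j = k))) :
    Cc X i j k l = 0 := by
  push_neg at h
  obtain ⟨h1, h2, h3⟩ := h
  have key : ∃ m, (if i = m then (-1:ℝ) else 1) * (if j = m then (-1:ℝ) else 1)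
      * (if k = m then (-1:ℝ) else 1) * (if l = m then (-1:ℝ) else 1) = -1 := by
    by_cases hij : i = j
    · have hkl : k ≠ l := fun hc => (h1 hij) hc
      refine ⟨l, ?_⟩
      subst hij
      by_cases hil : i = l <;> simp [hil, hkl]
    · by_cases hik : i = k
      · have hjl : j ≠ l := fun hc => (h2 hik) hc
        refine ⟨j, ?_⟩
        subst hik
        simp [hij, Ne.symm hij, Ne.symm hjl]
      · by_cases hil : i = l
        · have hjk : j ≠ k := fun hc => (h3 hil) hc
          refine ⟨j, ?_⟩
          subst hil
          simp [hij, Ne.symm hij, Ne.symm hjk]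
        · refine ⟨i, ?_⟩
          simp [Ne.symm hij, Ne.symm hik, Ne.symm hil]
  obtain ⟨m, hm⟩ := key
  have hsgn := Cc_sign X hinv m i j k l
  rw [hm] at hsgn
  linarith

lemma exists_perm_pair (u v i k : Fin d) (huv : u ≠ v) (hik : i ≠ k) :
    ∃ σ : Equiv.Perm (Fin d), σ u = i ∧ σ v = k := by
  refine ⟨(Equiv.swap v ((Equiv.swap u i).symm k)).trans (Equiv.swap u i), ?_, ?_⟩
  · have hk' : (Equiv.swap u i).symm k ≠ u := by
      intro hc
      apply hik
      have h2 := congrArg (Equiv.swap u i) hc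
      rw [Equiv.apply_symm_apply, Equiv.swap_apply_left] at h2
      exact h2.symm
    rw [Equiv.trans_apply, Equiv.swap_apply_of_ne_of_ne huv (Ne.symm hk'),
      Equiv.swap_apply_left]
  · rw [Equiv.trans_apply, Equiv.swap_apply_left, Equiv.apply_symm_apply]

section SumEval
variable {x : Fin d → ℝ}

lemma sum_ite_const (P : Prop) [Decidable P] {ι : Type*} (s : Finset ι) (f : ι → ℝ) :
    ∑ k ∈ s, (if P then f k else 0) = if P then ∑ k ∈ s, f k else 0 := by
  by_cases h : P <;> simp [h]

lemma ite_not_split (Q : Prop) [Decidable Q] (c : ℝ) :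
    (if ¬Q then c else 0) = c - (if Q then c else 0) := by
  by_cases q : Q <;> simp [q]

lemma evalT1 (c : ℝ) (x : Fin d → ℝ) :
    ∑ i, ∑ j, ∑ k, ∑ l, (if i = j ∧ k = l ∧ i = k then c else 0) * (x i * x j * x k * x l)
      = c * ∑ i, x i ^ 4 := by
  simp only [ite_and, ite_mul, zero_mul, sum_ite_const, Finset.sum_ite_eq,
    Finset.mem_univ, if_true]
  rw [Finset.mul_sum]
  exact Finset.sum_congr rfl fun i _ => by ring

lemma evalT2 (c : ℝ) (x : Fin d → ℝ) :
    ∑ i, ∑ j, ∑ k, ∑ l, (if i = j ∧ k = l ∧ ¬ i = k then c else 0) * (x i * x j * x k * x l)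
      = c * ((∑ i, x i ^ 2) ^ 2 - ∑ i, x i ^ 4) := by
  simp only [ite_and, ite_mul, zero_mul, sum_ite_const, Finset.sum_ite_eq,
    Finset.mem_univ, if_true, ite_not_split]
  have hpt : ∀ i k : Fin d, (c - if i = k then c else 0) * (x i * x i * x k * x k)
      = c * (x i ^ 2 * x k ^ 2) - (if i = k then c * (x i ^ 2 * x k ^ 2) else 0) := by
    intro i k
    by_cases h : i = k
    · simp [h]
    · rw [if_neg h, if_neg h, sub_zero, sub_zero]; ring
  rw [Finset.sum_congr rfl fun i (_ : i ∈ Finset.univ) =>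
    Finset.sum_congr rfl fun k (_ : k ∈ Finset.univ) => hpt i k]
  simp only [Finset.sum_sub_distrib, Finset.sum_ite_eq, Finset.mem_univ, if_true]
  rw [mul_sub, pow_two, Finset.sum_mul_sum]
  congr 1
  · rw [Finset.mul_sum]
    refine Finset.sum_congr rfl fun i _ => ?_
    rw [Finset.mul_sum]
  · rw [Finset.mul_sum]
    refine Finset.sum_congr rfl fun i _ => ?_
    ring

lemma evalT3 (c : ℝ) (x : Fin d → ℝ) :
    ∑ i, ∑ j, ∑ k, ∑ l, (if i = k ∧ j = l ∧ ¬ i = j then c else 0) * (x i * x j * x k * x l)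
      = c * ((∑ i, x i ^ 2) ^ 2 - ∑ i, x i ^ 4) := by
  simp only [ite_and, ite_mul, zero_mul, sum_ite_const, Finset.sum_ite_eq,
    Finset.mem_univ, if_true, ite_not_split]
  have hpt : ∀ i k : Fin d, (c - if i = k then c else 0) * (x i * x k * x i * x k)
      = c * (x i ^ 2 * x k ^ 2) - (if i = k then c * (x i ^ 2 * x k ^ 2) else 0) := by
    intro i k
    by_cases h : i = k
    · simp [h]
    · rw [if_neg h, if_neg h, sub_zero, sub_zero]; ring
  rw [Finset.sum_congr rfl fun i (_ : i ∈ Finset.univ) =>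
    Finset.sum_congr rfl fun k (_ : k ∈ Finset.univ) => hpt i k]
  simp only [Finset.sum_sub_distrib, Finset.sum_ite_eq, Finset.mem_univ, if_true]
  rw [mul_sub, pow_two, Finset.sum_mul_sum]
  congr 1
  · rw [Finset.mul_sum]
    refine Finset.sum_congr rfl fun i _ => ?_
    rw [Finset.mul_sum]
  · rw [Finset.mul_sum]
    refine Finset.sum_congr rfl fun i _ => ?_
    ring

lemma evalT4 (c : ℝ) (x : Fin d → ℝ) :
    ∑ i, ∑ j, ∑ k, ∑ l, (if i = l ∧ j = k ∧ ¬ i = j then c else 0) * (x i * x j * x k * x l)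
      = c * ((∑ i, x i ^ 2) ^ 2 - ∑ i, x i ^ 4) := by
  simp only [ite_and, ite_mul, zero_mul, sum_ite_const, Finset.sum_ite_eq,
    Finset.mem_univ, if_true, ite_not_split]
  have hpt : ∀ i k : Fin d, (c - if i = k then c else 0) * (x i * x k * x k * x i)
      = c * (x i ^ 2 * x k ^ 2) - (if i = k then c * (x i ^ 2 * x k ^ 2) else 0) := by
    intro i k
    by_cases h : i = k
    · simp [h]
    · rw [if_neg h, if_neg h, sub_zero, sub_zero]; ring
  rw [Finset.sum_congr rfl fun i (_ : i ∈ Finset.univ) =>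
    Finset.sum_congr rfl fun k (_ : k ∈ Finset.univ) => hpt i k]
  simp only [Finset.sum_sub_distrib, Finset.sum_ite_eq, Finset.mem_univ, if_true]
  rw [mul_sub, pow_two, Finset.sum_mul_sum]
  congr 1
  · rw [Finset.mul_sum]
    refine Finset.sum_congr rfl fun i _ => ?_
    rw [Finset.mul_sum]
  · rw [Finset.mul_sum]
    refine Finset.sum_congr rfl fun i _ => ?_
    ring

end SumEval

end Stmt4Aux


/-- Lemma: if `X ⊆ G_{2,d}` is `B_d`-invariant, then
`F_X(x) := ∑_{W∈X} ‖P_W x‖⁴` is `B_d`-invariant, and there are `α, β ∈ ℝ` with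
`F_X(x) = α ∑ᵢ xᵢ⁴ + β (∑ᵢ xᵢ²)²` for all `x ∈ ℝ^d`. -/
theorem stmt4 (d : ℕ) (hd : 4 ≤ d)
    (X : Finset (Submodule ℝ (EuclideanSpace ℝ (Fin d))))
    (hdim : ∀ W ∈ X, Module.finrank ℝ W = 2)
    (hinv : ∀ g : Matrix (Fin d) (Fin d) ℝ, IsSignedPerm g →
      ∀ W ∈ X, Submodule.map (Matrix.toEuclideanLin g) W ∈ X) :
    (∀ g : Matrix (Fin d) (Fin d) ℝ, IsSignedPerm g →
      ∀ x : EuclideanSpace ℝ (Fin d),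
        ∑ W ∈ X, ‖proj W (Matrix.toEuclideanLin g x)‖ ^ 4 =
          ∑ W ∈ X, ‖proj W x‖ ^ 4) ∧
    (∃ α β : ℝ, ∀ x : EuclideanSpace ℝ (Fin d),
      ∑ W ∈ X, ‖proj W x‖ ^ 4 =
        α * (∑ i, (x i) ^ 4) + β * (∑ i, (x i) ^ 2) ^ 2) := by
  constructor
  · exact fun g hg x => Stmt4Aux.part1 X hinv g hg x
  · classical
    set i0 : Fin d := ⟨0, by omega⟩ with hi0
    set i1 : Fin d := ⟨1, by omega⟩ with hi1
    have h01 : i0 ≠ i1 := by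
      intro h
      have := congrArg Fin.val h
      simp [hi0, hi1] at this
    set a := Stmt4Aux.Cc X i0 i0 i0 i0 with ha
    set b1 := Stmt4Aux.Cc X i0 i0 i1 i1 with hb1
    set b2 := Stmt4Aux.Cc X i0 i1 i0 i1 with hb2
    set b3 := Stmt4Aux.Cc X i0 i1 i1 i0 with hb3
    have hmodel : ∀ i j k l : Fin d, Stmt4Aux.Cc X i j k l =
        (if i = j ∧ k = l ∧ i = k then a else 0)
        + (if i = j ∧ k = l ∧ ¬ i = k then b1 else 0)
        + (if i = k ∧ j = l ∧ ¬ i = j then b2 else 0)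
        + (if i = l ∧ j = k ∧ ¬ i = j then b3 else 0) := by
      intro i j k l
      by_cases c2 : i = j ∧ k = l
      · obtain ⟨e1, e2⟩ := c2
        subst e1; subst e2
        by_cases c1 : i = k
        · subst c1
          have h := Stmt4Aux.Cc_perm X hinv (Equiv.swap i0 i) i0 i0 i0 i0
          rw [Equiv.swap_apply_left] at h
          simp only [and_self, not_true_eq_false, and_false, if_false, if_true,
            add_zero, zero_add, ha]
          rw [h]
        · obtain ⟨σ, hσ0, hσ1⟩ := Stmt4Aux.exists_perm_pair i0 i1 i k h01 c1
          have h := Stmt4Aux.Cc_perm X hinv σ i0 i0 i1 i1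
          rw [hσ0, hσ1] at h
          have hki : ¬ k = i := fun hc => c1 hc.symm
          simp only [c1, hki, and_false, false_and, and_true, not_false_eq_true,
            if_false, if_true, add_zero, zero_add, hb1]
          rw [h]
      · by_cases c3 : i = k ∧ j = l
        · obtain ⟨e1, e2⟩ := c3
          subst e1; subst e2
          have hij : ¬ i = j := fun hc => c2 ⟨hc, hc⟩
          obtain ⟨σ, hσ0, hσ1⟩ := Stmt4Aux.exists_perm_pair i0 i1 i j h01 hij
          have h := Stmt4Aux.Cc_perm X hinv σ i0 i1 i0 i1
          rw [hσ0, hσ1] at h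
          have hji : ¬ j = i := fun hc => hij hc.symm
          simp only [hij, hji, and_false, false_and, and_true, not_false_eq_true,
            if_false, if_true, add_zero, zero_add, hb2]
          rw [h]
        · by_cases c4 : i = l ∧ j = k
          · obtain ⟨e1, e2⟩ := c4
            subst e1; subst e2
            have hij : ¬ i = j := by
              intro hc
              exact c2 ⟨hc, by rw [hc]⟩
            obtain ⟨σ, hσ0, hσ1⟩ := Stmt4Aux.exists_perm_pair i0 i1 i j h01 hij
            have h := Stmt4Aux.Cc_perm X hinv σ i0 i1 i1 i0
            rw [hσ0, hσ1] at h
            have hji : ¬ j = i := fun hc => hij hc.symm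
            simp only [hij, hji, and_false, false_and, and_true, not_false_eq_true,
              if_false, if_true, add_zero, zero_add, hb3]
            rw [h]
          · rw [Stmt4Aux.Cc_vanish X hinv i j k l
              (by
                intro hE
                rcases hE with h | h | h
                · exact c2 h
                · exact c3 h
                · exact c4 h)]
            have f1 : ¬ (i = j ∧ k = l ∧ i = k) := fun hc => c2 ⟨hc.1, hc.2.1⟩
            have f2 : ¬ (i = j ∧ k = l ∧ ¬ i = k) := fun hc => c2 ⟨hc.1, hc.2.1⟩
            have f3 : ¬ (i = k ∧ j = l ∧ ¬ i = j) := fun hc => c3 ⟨hc.1, hc.2.1⟩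
            have f4 : ¬ (i = l ∧ j = k ∧ ¬ i = j) := fun hc => c4 ⟨hc.1, hc.2.1⟩
            rw [if_neg f1, if_neg f2, if_neg f3, if_neg f4]
            norm_num
    refine ⟨a - (b1 + b2 + b3), b1 + b2 + b3, fun x => ?_⟩
    rw [Stmt4Aux.fx_eq X x]
    have hsplit : ∑ i, ∑ j, ∑ k, ∑ l, Stmt4Aux.Cc X i j k l * (x i * x j * x k * x l)
        = (∑ i, ∑ j, ∑ k, ∑ l,
            (if i = j ∧ k = l ∧ i = k then a else 0) * (x i * x j * x k * x l))
          + (∑ i, ∑ j, ∑ k, ∑ l,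
            (if i = j ∧ k = l ∧ ¬ i = k then b1 else 0) * (x i * x j * x k * x l))
          + (∑ i, ∑ j, ∑ k, ∑ l,
            (if i = k ∧ j = l ∧ ¬ i = j then b2 else 0) * (x i * x j * x k * x l))
          + (∑ i, ∑ j, ∑ k, ∑ l,
            (if i = l ∧ j = k ∧ ¬ i = j then b3 else 0) * (x i * x j * x k * x l)) := by
      simp only [← Finset.sum_add_distrib]
      refine Finset.sum_congr rfl fun i _ => Finset.sum_congr rfl fun j _ =>
        Finset.sum_congr rfl fun k _ => Finset.sum_congr rfl fun l _ => ?_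
      rw [hmodel i j k l]
      ring
    rw [hsplit, Stmt4Aux.evalT1 a x, Stmt4Aux.evalT2 b1 x, Stmt4Aux.evalT3 b2 x,
      Stmt4Aux.evalT4 b3 x]
    ring
end
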